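/- arXiv:2004.07363 — 2 statements merged into one kernel-verified Lean document; each statement's English description precedes it below -/
import Mathlib

section
/- Skorohod representation on ℝ: if probability measures P_n on ℝ converge weakly to a probability measure P, then on the probability space ([0,1], Borel, Lebesgue) there exist random variables Y_n and Y such that Y_n has law P_n, Y has law P, and Y_n → Y almost surely. One may take Y_n = F_n⁻¹ ∘ U and Y = F⁻¹ ∘ U where U is the identity map and F_n, F are the cdfs. -/
open MeasureTheory Filter Topology Set ProbabilityTheory

namespace SkorohodAux
set_option linter.unusedSectionVars false
open scoped ENNReal NNReal


variable (μ : Measure ℝ) [IsProbabilityMeasure μ]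

/-- Quantile function (generalized inverse of the cdf). -/
noncomputable def quant (u : ℝ) : ℝ := sInf {x : ℝ | u ≤ cdf μ x}

variable {μ}

lemma qset_nonempty [IsProbabilityMeasure μ] {u : ℝ} (hu : u < 1) :
    {x : ℝ | u ≤ cdf μ x}.Nonempty := by
  have := (tendsto_cdf_atTop μ).eventually (eventually_ge_nhds hu)
  rcases this.exists with ⟨x, hx⟩
  exact ⟨x, hx⟩

lemma qset_bddBelow [IsProbabilityMeasure μ] {u : ℝ} (hu : 0 < u) :
    BddBelow {x : ℝ | u ≤ cdf μ x} := by
  have := (tendsto_cdf_atBot μ).eventually (eventually_lt_nhds hu)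
  rcases this.exists with ⟨x₀, hx₀⟩
  refine ⟨x₀, fun y hy => ?_⟩
  by_contra h
  push_neg at h
  exact absurd (hy.trans (monotone_cdf μ h.le)) (not_le.2 hx₀)

lemma le_cdf_quant [IsProbabilityMeasure μ] {u : ℝ} (h0 : 0 < u) (h1 : u < 1) :
    u ≤ cdf μ (quant μ u) := by
  set m := quant μ u with hm
  have hne := qset_nonempty (μ := μ) h1
  have hbdd := qset_bddBelow (μ := μ) h0
  have key : ∀ y, m < y → u ≤ cdf μ y := by
    intro y hy
    obtain ⟨z, hz, hzy⟩ := exists_lt_of_csInf_lt hne hy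
    exact hz.trans (monotone_cdf μ hzy.le)
  have ht : Tendsto (cdf μ) (𝓝[>] m) (𝓝 (cdf μ m)) :=
    ((cdf μ).right_continuous m).tendsto.mono_left (nhdsWithin_mono _ Ioi_subset_Ici_self)
  exact ge_of_tendsto ht (eventually_mem_nhdsWithin.mono fun y hy => key y hy)

lemma quant_le_iff [IsProbabilityMeasure μ] {u x : ℝ} (h0 : 0 < u) (h1 : u < 1) :
    quant μ u ≤ x ↔ u ≤ cdf μ x := by
  constructor
  · intro h
    exact (le_cdf_quant h0 h1).trans (monotone_cdf μ h)
  · intro h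
    exact csInf_le (qset_bddBelow h0) h

lemma quant_nonpos [IsProbabilityMeasure μ] {u : ℝ} (hu : u ≤ 0) : quant μ u = 0 := by
  have : {x : ℝ | u ≤ cdf μ x} = univ := eq_univ_of_forall fun x => hu.trans (cdf_nonneg μ x)
  rw [quant, this, Real.sInf_of_not_bddBelow not_bddBelow_univ]

lemma quant_gt_one [IsProbabilityMeasure μ] {u : ℝ} (hu : 1 < u) : quant μ u = 0 := by
  have : {x : ℝ | u ≤ cdf μ x} = ∅ := by
    ext x; simp only [mem_setOf_eq, mem_empty_iff_false, iff_false, not_le]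
    exact (cdf_le_one μ x).trans_lt hu
  rw [quant, this, Real.sInf_empty]

lemma quant_mono [IsProbabilityMeasure μ] {u v : ℝ} (h0 : 0 < u) (h1 : v < 1) (huv : u ≤ v) :
    quant μ u ≤ quant μ v :=
  csInf_le_csInf (qset_bddBelow h0) (qset_nonempty h1)
    (fun x hx => le_trans huv hx)

lemma measurable_quant [IsProbabilityMeasure μ] : Measurable (quant μ) := by
  apply measurable_of_Iic
  intro x
  have hdec : quant μ ⁻¹' Iic x =
      (Ioo (0:ℝ) 1 ∩ Iic (cdf μ x)) ∪ ((Iic 0 ∪ Ioi 1) ∩ {u : ℝ | (0:ℝ) ≤ x})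
        ∪ ({1} ∩ quant μ ⁻¹' Iic x) := by
    ext u
    simp only [mem_preimage, mem_Iic, mem_union, mem_inter_iff, mem_Ioo, mem_setOf_eq,
      mem_singleton_iff, mem_Ioi]
    constructor
    · intro h
      rcases le_or_gt u 0 with h0 | h0
      · exact Or.inl (Or.inr ⟨Or.inl h0, by rwa [quant_nonpos h0] at h⟩)
      rcases lt_trichotomy u 1 with h1 | h1 | h1
      · exact Or.inl (Or.inl ⟨⟨h0, h1⟩, (quant_le_iff h0 h1).1 h⟩)
      · exact Or.inr ⟨h1, h⟩
      · exact Or.inl (Or.inr ⟨Or.inr h1, by rwa [quant_gt_one h1] at h⟩)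
    · rintro ((⟨⟨h0, h1⟩, h⟩ | ⟨h01, hx⟩) | ⟨h1, h⟩)
      · exact (quant_le_iff h0 h1).2 h
      · rcases h01 with h0 | h1
        · rwa [quant_nonpos h0]
        · rwa [quant_gt_one h1]
      · exact h
  rw [hdec]
  refine ((measurableSet_Ioo.inter measurableSet_Iic).union
    ((measurableSet_Iic.union measurableSet_Ioi).inter ?_)).union
    (((countable_singleton (1:ℝ)).mono inter_subset_left).measurableSet)
  by_cases h : (0:ℝ) ≤ x <;> simp [h]


instance : IsProbabilityMeasure (volume.restrict (Icc (0:ℝ) 1)) := ⟨by simp⟩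

lemma map_quant : Measure.map (quant μ) (volume.restrict (Icc (0:ℝ) 1)) = μ := by
  have hIoo : volume.restrict (Icc (0:ℝ) 1) = volume.restrict (Ioo (0:ℝ) 1) :=
    (Measure.restrict_congr_set Ioo_ae_eq_Icc).symm
  have hm : Measurable (quant μ) := measurable_quant
  have : IsProbabilityMeasure (Measure.map (quant μ) (volume.restrict (Icc (0:ℝ) 1))) :=
    Measure.isProbabilityMeasure_map hm.aemeasurable
  refine Measure.ext_of_Iic _ _ (fun x => ?_)
  rw [Measure.map_apply hm measurableSet_Iic, hIoo,
    Measure.restrict_apply (hm measurableSet_Iic)]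
  have hset : quant μ ⁻¹' Iic x ∩ Ioo 0 1 = Iic (cdf μ x) ∩ Ioo 0 1 := by
    ext u
    simp only [mem_inter_iff, mem_preimage, mem_Iic, mem_Ioo]
    exact and_congr_left fun hu => quant_le_iff hu.1 hu.2
  rw [hset, ← ofReal_cdf μ x]
  rcases lt_or_eq_of_le (cdf_le_one μ x) with hc | hc
  · have : Iic (cdf μ x) ∩ Ioo (0:ℝ) 1 = Ioc 0 (cdf μ x) := by
      ext u
      simp only [mem_inter_iff, mem_Iic, mem_Ioo, mem_Ioc]
      exact ⟨fun h => ⟨h.2.1, h.1⟩, fun h => ⟨h.2, h.1, h.2.trans_lt hc⟩⟩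
    rw [this, Real.volume_Ioc, sub_zero]
  · have : Iic (cdf μ x) ∩ Ioo (0:ℝ) 1 = Ioo 0 1 := by
      rw [← hc]; exact inter_eq_self_of_subset_right fun u hu => hu.2.le.trans (by rw [hc])
    rw [this, Real.volume_Ioo, ← hc]
    norm_num

/-- cdf convergence at non-atoms of the limit, from weak convergence. -/
lemma tendsto_cdf_of_weak (P : ℕ → Measure ℝ) (Q : Measure ℝ)
    [∀ n, IsProbabilityMeasure (P n)] [IsProbabilityMeasure Q]
    (hweak : ∀ f : BoundedContinuousFunction ℝ ℝ,
      Tendsto (fun n => ∫ x, f x ∂(P n)) atTop (𝓝 (∫ x, f x ∂Q)))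
    {x : ℝ} (hx : Q {x} = 0) :
    Tendsto (fun n => cdf (P n) x) atTop (𝓝 (cdf Q x)) := by
  set Pp : ℕ → ProbabilityMeasure ℝ := fun n => ⟨P n, inferInstance⟩
  set Qp : ProbabilityMeasure ℝ := ⟨Q, inferInstance⟩
  have htend : Tendsto Pp atTop (𝓝 Qp) :=
    ProbabilityMeasure.tendsto_iff_forall_integral_tendsto.mpr hweak
  have hbdry : Qp (frontier (Iic x)) = 0 := by
    rw [frontier_Iic]
    have h0 : (↑(Qp ({x} : Set ℝ)) : ℝ≥0∞) = 0 := by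
      rw [ProbabilityMeasure.ennreal_coeFn_eq_coeFn_toMeasure]; exact hx
    exact_mod_cast h0
  have key := ProbabilityMeasure.tendsto_measure_of_null_frontier_of_tendsto htend hbdry
  have key' : Tendsto (fun n => ((Pp n (Iic x) : ℝ≥0) : ℝ)) atTop (𝓝 ((Qp (Iic x) : ℝ≥0) : ℝ)) :=
    NNReal.tendsto_coe.mpr key
  have heq : ∀ (ν : ProbabilityMeasure ℝ),
      ((ν (Iic x) : ℝ≥0) : ℝ) = ((ν : Measure ℝ) (Iic x)).toReal := fun ν => by
    rw [← ProbabilityMeasure.ennreal_coeFn_eq_coeFn_toMeasure, ENNReal.coe_toReal]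
  have heqn : (fun n => ((Pp n (Iic x) : ℝ≥0) : ℝ)) = fun n => cdf (P n) x := by
    funext n
    rw [heq (Pp n), cdf_eq_real]
    rfl
  have heqQ : ((Qp (Iic x) : ℝ≥0) : ℝ) = cdf Q x := by
    rw [heq Qp, cdf_eq_real]
    rfl
  rw [heqn, heqQ] at key'
  exact key'

lemma exists_nonatom (Q : Measure ℝ) [IsProbabilityMeasure Q] {a b : ℝ} (hab : a < b) :
    ∃ x, x ∈ Ioo a b ∧ Q {x} = 0 := by
  have hcnt : {t : ℝ | 0 < Q {t}}.Countable := by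
    have := Measure.countable_meas_level_set_pos (μ := Q) (g := fun t : ℝ => t) measurable_id
    simpa [Set.setOf_eq_eq_singleton] using this
  by_contra h
  push_neg at h
  have hsub : Ioo a b ⊆ {t : ℝ | 0 < Q {t}} := by
    intro t ht
    exact pos_iff_ne_zero.mpr (h t ht)
  have : (Ioo a b).Countable := hcnt.mono hsub
  have h1 := this.le_aleph0
  rw [Cardinal.mk_Ioo_real hab] at h1
  exact Cardinal.aleph0_lt_continuum.not_ge h1

/-- The truncation of the quantile function used to get monotonicity on all of ℝ. -/
noncomputable def qtrunc (Q : Measure ℝ) (k : ℕ) (u : ℝ) : ℝ :=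
  quant Q (max (1/((k:ℝ)+2)) (min u (1 - 1/((k:ℝ)+2))))

lemma ak_pos (k : ℕ) : 0 < 1/((k:ℝ)+2) := by positivity

lemma ak_lt (k : ℕ) : 1/((k:ℝ)+2) ≤ 1 - 1/((k:ℝ)+2) := by
  have hk : (0:ℝ) ≤ (k:ℝ) := Nat.cast_nonneg k
  have h2 : (2:ℝ) ≤ (k:ℝ)+2 := by linarith
  have := one_div_le_one_div_of_le (by norm_num : (0:ℝ) < 2) h2
  linarith

lemma qtrunc_mono (Q : Measure ℝ) [IsProbabilityMeasure Q] (k : ℕ) :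
    Monotone (qtrunc Q k) := by
  intro u v huv
  have h1 : (0:ℝ) < max (1/((k:ℝ)+2)) (min u (1 - 1/((k:ℝ)+2))) := lt_of_lt_of_le (ak_pos k) (le_max_left _ _)
  have h2 : max (1/((k:ℝ)+2)) (min v (1 - 1/((k:ℝ)+2))) < 1 := by
    have : min v (1 - 1/((k:ℝ)+2)) ≤ 1 - 1/((k:ℝ)+2) := min_le_right _ _
    have hlt : 1 - 1/((k:ℝ)+2) < 1 := by have := ak_pos k; linarith
    exact max_lt (lt_of_le_of_lt (ak_lt k) hlt) (lt_of_le_of_lt this hlt)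
  exact quant_mono h1 h2 (max_le_max le_rfl (min_le_min huv le_rfl))

lemma qtrunc_eq (Q : Measure ℝ) (k : ℕ) {u : ℝ} (h1 : 1/((k:ℝ)+2) ≤ u)
    (h2 : u ≤ 1 - 1/((k:ℝ)+2)) : qtrunc Q k u = quant Q u := by
  rw [qtrunc, min_eq_left h2, max_eq_right h1]

/-- Key approximation property at continuity points. -/
lemma exists_lt_of_cont (Q : Measure ℝ) [IsProbabilityMeasure Q] {u : ℝ}
    (hu0 : 0 < u) (hu1 : u < 1)
    (hcont : ∀ k, ContinuousAt (qtrunc Q k) u) {ε : ℝ} (hε : 0 < ε) :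
    ∃ u', u < u' ∧ u' < 1 ∧ quant Q u' < quant Q u + ε := by
  -- choose k with 1/((k:ℝ)+2) < u and u < 1 - 1/((k:ℝ)+2)
  obtain ⟨k, hk⟩ := exists_nat_gt (max (1/u) (1/(1-u)))
  have hu1' : 0 < 1 - u := by linarith
  have hk2 : (0:ℝ) < (k:ℝ)+2 := by positivity
  have hku : 1/((k:ℝ)+2) < u := by
    rw [div_lt_iff₀ hk2]
    have h1 : 1/u < (k:ℝ)+2 := lt_of_le_of_lt (le_max_left _ _) (by linarith)
    have := (div_lt_iff₀ hu0).mp h1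
    linarith [mul_comm u ((k:ℝ)+2)]
  have hku' : u < 1 - 1/((k:ℝ)+2) := by
    have h1 : 1/(1-u) < (k:ℝ)+2 := lt_of_le_of_lt (le_max_right _ _) (by linarith)
    have := (div_lt_iff₀ hu1').mp h1
    have h2 : 1/((k:ℝ)+2) < 1-u := by
      rw [div_lt_iff₀ hk2]
      linarith [mul_comm (1-u) ((k:ℝ)+2)]
    linarith
  have hc := (hcont k).tendsto
  have hqq : qtrunc Q k u = quant Q u := qtrunc_eq Q k hku.le hku'.le
  have hev1 : ∀ᶠ v in 𝓝 u, qtrunc Q k v < quant Q u + ε := by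
    apply hc.eventually_lt_const
    rw [hqq]; linarith
  have hev2 : ∀ᶠ v in 𝓝 u, v < 1 - 1/((k:ℝ)+2) := eventually_lt_nhds hku'
  obtain ⟨v, ⟨hv1, hv2⟩, hv3⟩ :=
    (((hev1.and hev2).filter_mono (nhdsWithin_le_nhds (s := Ioi u))).and
      (eventually_mem_nhdsWithin : ∀ᶠ v in 𝓝[>] u, v ∈ Ioi u)).exists
  refine ⟨v, hv3, ?_, ?_⟩
  · have := ak_pos k; linarith
  · have : qtrunc Q k v = quant Q v := qtrunc_eq Q k (le_trans hku.le (le_of_lt hv3)) hv2.le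
    rw [← this]; exact hv1

/-- Pointwise convergence of quantile functions at good points. -/
lemma tendsto_quant (P : ℕ → Measure ℝ) (Q : Measure ℝ)
    [∀ n, IsProbabilityMeasure (P n)] [IsProbabilityMeasure Q]
    (hweak : ∀ f : BoundedContinuousFunction ℝ ℝ,
      Tendsto (fun n => ∫ x, f x ∂(P n)) atTop (𝓝 (∫ x, f x ∂Q)))
    {u : ℝ} (hu0 : 0 < u) (hu1 : u < 1)
    (hcont : ∀ k, ContinuousAt (qtrunc Q k) u) :
    Tendsto (fun n => quant (P n) u) atTop (𝓝 (quant Q u)) := by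
  rw [tendsto_order]
  constructor
  · intro b hb
    obtain ⟨x, hx, hxa⟩ := exists_nonatom Q hb
    have hFx : cdf Q x < u := by
      by_contra h
      push_neg at h
      exact absurd ((quant_le_iff hu0 hu1).mpr h) (not_le.2 hx.2)
    have := (tendsto_cdf_of_weak P Q hweak hxa).eventually_lt_const hFx
    filter_upwards [this] with n hn
    have : ¬ quant (P n) u ≤ x := fun h => absurd ((quant_le_iff hu0 hu1).mp h) (not_le.2 hn)
    exact hx.1.trans (not_le.1 this)
  · intro b hb
    obtain ⟨u', hu', hu'1, hqu'⟩ := exists_lt_of_cont Q hu0 hu1 hcont (sub_pos.mpr hb)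
    have hqu'b : quant Q u' < b := by linarith
    obtain ⟨x, hx, hxa⟩ := exists_nonatom Q hqu'b
    have hFx : u < cdf Q x := lt_of_lt_of_le hu'
      ((quant_le_iff (hu0.trans hu') hu'1).mp hx.1.le)
    have := (tendsto_cdf_of_weak P Q hweak hxa).eventually_const_lt hFx
    filter_upwards [this] with n hn
    exact lt_of_le_of_lt ((quant_le_iff hu0 hu1).mpr hn.le) hx.2

end SkorohodAux

open SkorohodAux Set

/-- Skorohod representation on ℝ: if probability measures `P n` converge weakly to `P`,
then on `([0,1], Borel, Lebesgue)` there are random variables `Y n` with law `P n` and `Y∞`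
with law `P` such that `Y n → Y∞` almost surely; one may take the quantile transforms. -/
theorem skorohod_representation_real
    (P : ℕ → Measure ℝ) (Q : Measure ℝ)
    [∀ n, IsProbabilityMeasure (P n)] [IsProbabilityMeasure Q]
    (hweak : ∀ f : BoundedContinuousFunction ℝ ℝ,
      Tendsto (fun n => ∫ x, f x ∂(P n)) atTop (𝓝 (∫ x, f x ∂Q))) :
    ∃ (Y : ℕ → ℝ → ℝ) (Z : ℝ → ℝ),
      (∀ n, Measurable (Y n)) ∧ Measurable Z ∧
      (∀ n, Measure.map (Y n) (volume.restrict (Set.Icc (0:ℝ) 1)) = P n) ∧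
      Measure.map Z (volume.restrict (Set.Icc (0:ℝ) 1)) = Q ∧
      (∀ n, Y n = fun u => sInf {x : ℝ | u ≤ ((P n) (Set.Iic x)).toReal}) ∧
      (Z = fun u => sInf {x : ℝ | u ≤ (Q (Set.Iic x)).toReal}) ∧
      ∀ᵐ u ∂(volume.restrict (Set.Icc (0:ℝ) 1)),
        Tendsto (fun n => Y n u) atTop (𝓝 (Z u)) := by
  have hform : ∀ (μ : Measure ℝ) [IsProbabilityMeasure μ],
      quant μ = fun u => sInf {x : ℝ | u ≤ (μ (Set.Iic x)).toReal} := by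
    intro μ hμ
    funext u
    rw [quant]
    congr 1
    ext x
    simp only [Set.mem_setOf_eq, ProbabilityTheory.cdf_eq_real, measureReal_def]
  refine ⟨fun n => quant (P n), quant Q, fun n => measurable_quant, measurable_quant,
    fun n => map_quant, map_quant, fun n => hform (P n), hform Q, ?_⟩
  have hIoo : volume.restrict (Icc (0:ℝ) 1) = volume.restrict (Ioo (0:ℝ) 1) :=
    (Measure.restrict_congr_set Ioo_ae_eq_Icc).symm
  rw [hIoo, ae_restrict_iff' measurableSet_Ioo]
  have hNc : (⋃ k, {u : ℝ | ¬ContinuousAt (qtrunc Q k) u}).Countable :=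
    Set.countable_iUnion fun k => (qtrunc_mono Q k).countable_not_continuousAt
  have hN : volume (⋃ k, {u : ℝ | ¬ContinuousAt (qtrunc Q k) u}) = 0 :=
    hNc.measure_zero _
  filter_upwards [measure_eq_zero_iff_ae_notMem.mp hN] with u hu hmem
  have hcont : ∀ k, ContinuousAt (qtrunc Q k) u := by
    simpa [Set.mem_iUnion, not_not] using hu
  exact tendsto_quant P Q hweak hmem.1 hmem.2 hcont
end

section
/- Let P_α and P be probability measures on a measurable space S, let (C_p)_{p∈I} be a finite measurable partition of S with P_α(C_p) > 0 and P(C_p) > 0 for p ∈ I, and let 0 < β* < 1. Define H_α(A) = (1/(1−β*)) P_α(A) − (β*/(1−β*)) Σ_{p∈I} P_α(A | C_p) P(C_p). If β* ≤ min_{p∈I} P_α(C_p)/P(C_p), then H_α is a probability measure, and P_α(A) = (1−β*) H_α(A) + β* Σ_{p∈I} P(C_p) P_α(A | C_p) for all measurable A. -/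
open MeasureTheory Finset

lemma wichura_part_sum {S : Type*} [MeasurableSpace S] {I : Type*} [Fintype I]
    (μ : Measure S) (C : I → Set S) (hmeas : ∀ p, MeasurableSet (C p))
    (hdisj : Pairwise (Function.onFun Disjoint C)) (hcover : (⋃ p, C p) = Set.univ)
    (A : Set S) (hA : MeasurableSet A) : μ A = ∑ p, μ (A ∩ C p) := by
  conv_lhs => rw [show A = ⋃ p, A ∩ C p by
    rw [← Set.inter_iUnion, hcover, Set.inter_univ]]
  rw [measure_iUnion ?_ (fun p => hA.inter (hmeas p)), tsum_fintype]
  exact fun i j hij => (hdisj hij).mono Set.inter_subset_right Set.inter_subset_right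

/-- Wichura's decomposition: if `β* ≤ min_p P_α(C p)/P(C p)` for a finite measurable partition
`(C p)`, then `H_α(A) = (1/(1-β*)) P_α(A) - (β*/(1-β*)) Σ_p P_α(A|C p) P(C p)` defines a
probability measure and `P_α = (1-β*) H_α + β* Σ_p P(C p) P_α(·|C p)`. -/
theorem wichura_decomposition
    {S : Type*} [MeasurableSpace S] {I : Type*} [Fintype I]
    (Pα Q : Measure S) [IsProbabilityMeasure Pα] [IsProbabilityMeasure Q]
    (C : I → Set S) (hmeas : ∀ p, MeasurableSet (C p))
    (hdisj : Pairwise (Function.onFun Disjoint C)) (hcover : (⋃ p, C p) = Set.univ)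
    (hposα : ∀ p, 0 < Pα (C p)) (hposQ : ∀ p, 0 < Q (C p))
    (β : ℝ) (hβ0 : 0 < β) (hβ1 : β < 1)
    (hβle : ∀ p, β ≤ (Pα (C p)).toReal / (Q (C p)).toReal) :
    ∃ H : Measure S, IsProbabilityMeasure H ∧
      (∀ A : Set S, MeasurableSet A →
        (H A).toReal = (1 / (1 - β)) * (Pα A).toReal
          - (β / (1 - β)) * ∑ p : I,
              ((Pα (A ∩ C p)).toReal / (Pα (C p)).toReal) * (Q (C p)).toReal) ∧
      (∀ A : Set S, MeasurableSet A →
        (Pα A).toReal = (1 - β) * (H A).toReal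
          + β * ∑ p : I,
              (Q (C p)).toReal * ((Pα (A ∩ C p)).toReal / (Pα (C p)).toReal)) := by
  have hβ1' : (0:ℝ) < 1 - β := by linarith
  set a : I → ℝ := fun p => (Pα (C p)).toReal with ha
  set q : I → ℝ := fun p => (Q (C p)).toReal with hq
  have hapos : ∀ p, 0 < a p := fun p =>
    ENNReal.toReal_pos (hposα p).ne' (measure_ne_top _ _)
  have hqpos : ∀ p, 0 < q p := fun p =>
    ENNReal.toReal_pos (hposQ p).ne' (measure_ne_top _ _)
  set c : I → ℝ := fun p => (1 - β * q p / a p) / (1 - β) with hc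
  have hcnonneg : ∀ p, 0 ≤ c p := by
    intro p
    have h : β * q p ≤ a p := (le_div_iff₀ (hqpos p)).mp (hβle p)
    have h2 : β * q p / a p ≤ 1 := (div_le_one (hapos p)).mpr h
    exact div_nonneg (by linarith) hβ1'.le
  -- sums of partition pieces
  have hsuma : ∑ p, a p = 1 := by
    have := wichura_part_sum Pα C hmeas hdisj hcover Set.univ MeasurableSet.univ
    simp only [Set.univ_inter, measure_univ] at this
    simp only [ha]
    rw [← ENNReal.toReal_sum (fun p _ => measure_ne_top _ _), ← this]
    simp
  have hsumq : ∑ p, q p = 1 := by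
    have := wichura_part_sum Q C hmeas hdisj hcover Set.univ MeasurableSet.univ
    simp only [Set.univ_inter, measure_univ] at this
    simp only [hq]
    rw [← ENNReal.toReal_sum (fun p _ => measure_ne_top _ _), ← this]
    simp
  set H : Measure S := ∑ p, ENNReal.ofReal (c p) • Pα.restrict (C p) with hH
  have hHapp : ∀ A : Set S, MeasurableSet A →
      H A = ∑ p, ENNReal.ofReal (c p) * Pα (A ∩ C p) := by
    intro A hA
    rw [hH, Measure.finset_sum_apply]
    exact Finset.sum_congr rfl fun p _ => by
      rw [Measure.smul_apply, Measure.restrict_apply hA, smul_eq_mul]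
  have hne : ∀ (A : Set S) (p : I), ENNReal.ofReal (c p) * Pα (A ∩ C p) ≠ ⊤ :=
    fun A p => ENNReal.mul_ne_top ENNReal.ofReal_ne_top (measure_ne_top _ _)
  have hHreal : ∀ A : Set S, MeasurableSet A →
      (H A).toReal = ∑ p, c p * (Pα (A ∩ C p)).toReal := by
    intro A hA
    rw [hHapp A hA, ENNReal.toReal_sum (fun p _ => hne A p)]
    exact Finset.sum_congr rfl fun p _ => by
      rw [ENNReal.toReal_mul, ENNReal.toReal_ofReal (hcnonneg p)]
  have hPA : ∀ A : Set S, MeasurableSet A →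
      (Pα A).toReal = ∑ p, (Pα (A ∩ C p)).toReal := by
    intro A hA
    rw [wichura_part_sum Pα C hmeas hdisj hcover A hA,
      ENNReal.toReal_sum (fun p _ => measure_ne_top _ _)]
  have hfor1 : ∀ A : Set S, MeasurableSet A →
      (H A).toReal = (1 / (1 - β)) * (Pα A).toReal
        - (β / (1 - β)) * ∑ p : I,
            ((Pα (A ∩ C p)).toReal / (Pα (C p)).toReal) * (Q (C p)).toReal := by
    intro A hA
    rw [hHreal A hA, hPA A hA, Finset.mul_sum, Finset.mul_sum, ← Finset.sum_sub_distrib]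
    refine Finset.sum_congr rfl fun p _ => ?_
    have h1 : a p ≠ 0 := (hapos p).ne'
    have h2 : (1:ℝ) - β ≠ 0 := hβ1'.ne'
    show c p * (Pα (A ∩ C p)).toReal
      = 1 / (1 - β) * (Pα (A ∩ C p)).toReal
        - β / (1 - β) * ((Pα (A ∩ C p)).toReal / a p * q p)
    rw [hc]
    field_simp
  have hHne : H Set.univ ≠ ⊤ := by
    rw [hHapp Set.univ MeasurableSet.univ]
    exact ENNReal.sum_ne_top.mpr fun p _ => hne Set.univ p
  have hHuniv : (H Set.univ).toReal = 1 := by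
    rw [hfor1 Set.univ MeasurableSet.univ]
    have : ∑ p : I, ((Pα (Set.univ ∩ C p)).toReal / (Pα (C p)).toReal) * (Q (C p)).toReal
        = ∑ p, q p := by
      refine Finset.sum_congr rfl fun p _ => ?_
      rw [Set.univ_inter, div_self (hapos p).ne', one_mul]
    rw [this, hsumq, measure_univ]
    simp only [ENNReal.toReal_one]
    field_simp
  refine ⟨H, ⟨?_⟩, hfor1, ?_⟩
  · rw [← ENNReal.ofReal_toReal hHne, hHuniv, ENNReal.ofReal_one]
  · intro A hA
    rw [hfor1 A hA]
    have hcomm : ∑ p : I, (Q (C p)).toReal * ((Pα (A ∩ C p)).toReal / (Pα (C p)).toReal)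
        = ∑ p : I, ((Pα (A ∩ C p)).toReal / (Pα (C p)).toReal) * (Q (C p)).toReal :=
      Finset.sum_congr rfl fun p _ => mul_comm _ _
    rw [hcomm]
    field_simp
    ring
end
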